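/- Let k be a finite field or an algebraically closed field of characteristic 2, V of even dimension D, Q a nondegenerate quadratic form on V (so R = 0), and N ∈ 𝓜̃_Q. Then for every subspace S ⊆ V with dim S = D/2 on which Q vanishes identically, one has dim(S/(S ∩ (1+N)(S))) ≡ dim ker N (mod 2). -/

import Mathlib

open QuadraticMap

variable {k V : Type*}

/-- The perpendicular of a set `S ⊆ V` with respect to the bilinear form
`⟨x,y⟩ = Q(x+y) - Q x - Q y` associated to a quadratic form `Q`. -/
def perp [Field k] [AddCommGroup V] [Module k V] (Q : QuadraticForm k V) (S : Set V) :
    Submodule k V where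
  carrier := {x | ∀ y ∈ S, polar Q x y = 0}
  add_mem' := by
    intro a b ha hb y hy
    rw [polar_add_left, ha y hy, hb y hy, add_zero]
  zero_mem' := by
    intro y hy
    simp [polar]
  smul_mem' := by
    intro c a ha y hy
    rw [polar_smul_left, ha y hy, smul_zero]

/-- The radical `R = {x ∈ V : ⟨x, V⟩ = 0}` of the bilinear form associated to `Q`. -/
def rad [Field k] [AddCommGroup V] [Module k V] (Q : QuadraticForm k V) : Submodule k V :=
  perp Q Set.univ

/-- `Q` is nondegenerate: its restriction to the radical of the associated bilinear
form is injective. -/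
def QNondeg [Field k] [AddCommGroup V] [Module k V] (Q : QuadraticForm k V) : Prop :=
  Set.InjOn Q (rad Q : Set V)

/-- `𝓜̃_Q`: the set of nilpotent endomorphisms `N` with `Q(Nx) = -⟨x, Nx⟩` for all `x`
(equivalently, `1 + N` is a unipotent element of the orthogonal group `O_Q`). -/
def Mtilde [Field k] [AddCommGroup V] [Module k V] (Q : QuadraticForm k V) :
    Set (Module.End k V) :=
  {N | IsNilpotent N ∧ ∀ x, Q (N x) = - polar Q x (N x)}


namespace S17

open Module Submodule

universe u w

variable {k : Type u} [Field k]

section basic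
variable {V : Type w} [AddCommGroup V] [Module k V]

lemma polar_singular (Q : QuadraticForm k V) {L : Submodule k V}
    (hL : ∀ x ∈ L, Q x = 0) {x y : V} (hx : x ∈ L) (hy : y ∈ L) :
    polar Q x y = 0 := by
  unfold polar
  rw [hL _ (add_mem hx hy), hL _ hx, hL _ hy]
  ring

lemma refl_polarBilin (Q : QuadraticForm k V) : Q.polarBilin.IsRefl := by
  intro x y h
  rw [polarBilin_apply_apply] at h ⊢
  rwa [polar_comm]

variable [FiniteDimensional k V]

/-- finrank of sup with a line not contained in W. -/
lemma finrank_sup_span {W : Submodule k V} {x : V} (hx : x ∉ W) :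
    finrank k (W ⊔ k ∙ x : Submodule k V) = finrank k W + 1 := by
  have hx0 : x ≠ 0 := fun h => hx (h ▸ W.zero_mem)
  have hinf : W ⊓ (k ∙ x) = ⊥ := by
    rw [eq_bot_iff]
    rintro u ⟨huW, hus⟩
    obtain ⟨c, rfl⟩ := mem_span_singleton.mp hus
    rcases eq_or_ne c 0 with rfl | hc
    · simp
    · have : x ∈ W := by
        have := W.smul_mem c⁻¹ huW
        rwa [smul_smul, inv_mul_cancel₀ hc, one_smul] at this
      exact absurd this hx
  have := Submodule.finrank_sup_add_finrank_inf_eq W (k ∙ x)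
  rw [hinf, finrank_bot, finrank_span_singleton hx0] at this
  omega

/-- finrank of intersecting with the kernel of a nonvanishing functional. -/
lemma finrank_inf_ker (M : Submodule k V) (φ : V →ₗ[k] k) {y : V}
    (hy : y ∈ M) (hφy : φ y ≠ 0) :
    finrank k (M ⊓ LinearMap.ker φ : Submodule k V) + 1 = finrank k M := by
  set ψ : M →ₗ[k] k := φ.comp M.subtype with hψ
  have hker : M ⊓ LinearMap.ker φ = Submodule.map M.subtype (LinearMap.ker ψ) := by
    ext z
    simp only [Submodule.mem_inf, LinearMap.mem_ker, Submodule.mem_map, Submodule.coe_subtype,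
      hψ, LinearMap.comp_apply]
    constructor
    · rintro ⟨hzM, hz⟩; exact ⟨⟨z, hzM⟩, hz, rfl⟩
    · rintro ⟨⟨w, hw⟩, h1, rfl⟩; exact ⟨hw, h1⟩
  have hsurj : Function.Surjective ψ := by
    intro c
    refine ⟨(c * (φ y)⁻¹) • ⟨y, hy⟩, ?_⟩
    have h1 : ψ ⟨y, hy⟩ = φ y := rfl
    rw [LinearMap.map_smul, smul_eq_mul, h1]
    field_simp
  have hrn := LinearMap.finrank_range_add_finrank_ker ψ
  rw [LinearMap.range_eq_top.mpr hsurj, finrank_top, finrank_self] at hrn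
  rw [hker, Submodule.finrank_map_subtype_eq]
  omega

end basic

/-- A nondegenerate alternating bilinear form lives on an even-dimensional space. -/
lemma even_finrank_of_alt_nondeg : ∀ (n : ℕ) (W : Type w) [AddCommGroup W] [Module k W]
    [FiniteDimensional k W] (B : LinearMap.BilinForm k W), (∀ x, B x x = 0) →
    B.Nondegenerate → finrank k W = n → Even n := by
  intro n
  induction n using Nat.strong_induction_on with
  | _ n ih =>
    intro W _ _ _ B halt hnd hdim
    rcases Nat.eq_zero_or_pos n with rfl | hn
    · exact Even.zero
    have hAlt : B.IsAlt := halt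
    have hskew : ∀ x y : W, B x y = - B y x := fun x y => by rw [← LinearMap.IsAlt.neg hAlt y x]
    have hrefl : B.IsRefl := hAlt.isRefl
    have : Nontrivial W := by
      rw [← Module.finrank_pos_iff (R := k)]; omega
    obtain ⟨x, hx0⟩ := exists_ne (0 : W)
    obtain ⟨y, hxy⟩ : ∃ y, B x y ≠ 0 := by
      by_contra h
      push_neg at h
      exact hx0 (hnd.1 x h)
    have hyx : B y x ≠ 0 := by rw [hskew y x]; simpa using hxy
    have hy0 : y ≠ 0 := by rintro rfl; simp at hxy
    have hxy' : x ∉ (k ∙ y) := by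
      intro h
      obtain ⟨c, rfl⟩ := mem_span_singleton.mp h
      rw [LinearMap.BilinForm.smul_left, halt y, mul_zero] at hxy
      exact hxy rfl
    set W2 : Submodule k W := (k ∙ y) ⊔ (k ∙ x) with hW2
    have hxW2 : x ∈ W2 := Submodule.mem_sup_right (mem_span_singleton_self x)
    have hyW2 : y ∈ W2 := Submodule.mem_sup_left (mem_span_singleton_self y)
    have hdim2 : finrank k W2 = 2 := by
      rw [hW2, finrank_sup_span hxy', finrank_span_singleton hy0]
    have hmem : ∀ u ∈ W2, ∃ a b : k, u = a • x + b • y := by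
      intro u hu
      obtain ⟨p, hp, q, hq, rfl⟩ := Submodule.mem_sup.mp hu
      obtain ⟨b, rfl⟩ := mem_span_singleton.mp hp
      obtain ⟨a, rfl⟩ := mem_span_singleton.mp hq
      exact ⟨a, b, by abel⟩
    have hndW2 : (B.restrict W2).Nondegenerate := by
      refine (LinearMap.IsRefl.nondegenerate_iff_separatingLeft (B := B.restrict _)
        (fun a b h => hrefl (a : W) b h)).mpr ?_
      rintro ⟨u, hu⟩ h
      obtain ⟨a, b, rfl⟩ := hmem u hu
      have h1 := h ⟨x, hxW2⟩
      have h2 := h ⟨y, hyW2⟩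
      have h1' : B (a • x + b • y) x = 0 := h1
      have h2' : B (a • x + b • y) y = 0 := h2
      rw [LinearMap.BilinForm.add_left, LinearMap.BilinForm.smul_left,
        LinearMap.BilinForm.smul_left, halt x, mul_zero, zero_add] at h1'
      rw [LinearMap.BilinForm.add_left, LinearMap.BilinForm.smul_left,
        LinearMap.BilinForm.smul_left, halt y, mul_zero, add_zero] at h2'
      have hb : b = 0 := by
        rcases mul_eq_zero.mp h1' with h | h
        · exact h
        · exact absurd h hyx
      have ha : a = 0 := by
        rcases mul_eq_zero.mp h2' with h | h
        · exact h
        · exact absurd h hxy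
      ext
      simp [ha, hb]
    have hcompl : IsCompl W2 (B.orthogonal W2) :=
      LinearMap.BilinForm.isCompl_orthogonal_of_restrict_nondegenerate hrefl hndW2
    set O := B.orthogonal W2 with hO
    have hndO : (B.restrict O).Nondegenerate := by
      refine (LinearMap.IsRefl.nondegenerate_iff_separatingLeft (B := B.restrict _)
        (fun a b h => hrefl (a : W) b h)).mpr ?_
      rintro ⟨u, hu⟩ h
      have : u = 0 := by
        apply hnd.1 u
        intro v
        have hv : v ∈ W2 ⊔ O := by rw [hcompl.sup_eq_top]; trivial
        obtain ⟨p, hp, q, hq, rfl⟩ := Submodule.mem_sup.mp hv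
        have h1 : B u p = 0 := by
          rw [hskew u p]
          have := hu p hp
          rw [this, neg_zero]
        have h2 : B u q = 0 := h ⟨q, hq⟩
        rw [map_add, h1, h2, add_zero]
      exact Subtype.ext this
    have haltO : ∀ u : O, (B.restrict O) u u = 0 := fun u => halt u
    have hfr : finrank k W2 + finrank k O = n := by
      rw [← hdim]; exact Submodule.finrank_add_eq_of_isCompl hcompl
    have hlt : finrank k O < n := by omega
    have heO : Even (finrank k O) :=
      ih (finrank k O) hlt O (B.restrict O) haltO hndO rfl
    obtain ⟨t, ht⟩ := heO
    exact ⟨t + 1, by omega⟩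

section nd
variable {V : Type w} [AddCommGroup V] [Module k V] [FiniteDimensional k V] [CharP k 2]

lemma map_add' (Q : QuadraticForm k V) (x y : V) :
    Q (x + y) = Q x + Q y + polar Q x y := by
  unfold QuadraticMap.polar
  ring

lemma char2 : ∀ c : k, c + c = 0 := by
  intro c
  have h2 : (2 : k) = 0 := by
    have := CharP.cast_eq_zero k 2
    simpa using this
  rw [← two_mul, h2, zero_mul]

lemma mem_rad_iff (Q : QuadraticForm k V) (x : V) : x ∈ rad Q ↔ ∀ y, polar Q x y = 0 :=
  ⟨fun h y => h y trivial, fun h y _ => h y⟩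

lemma polarBilin_nondeg (hk : (∀ a : k, ∃ c, c * c = a))
    (Q : QuadraticForm k V) (hQ : QNondeg Q) (heven : Even (finrank k V)) :
    LinearMap.BilinForm.Nondegenerate Q.polarBilin := by
  have hz : ∀ x ∈ rad Q, Q x = 0 → x = 0 := by
    intro x hx hQx
    exact hQ hx (Submodule.zero_mem _) (by rw [hQx, QuadraticMap.map_zero])
  have hrad : rad Q = ⊥ := by
    by_contra hne
    obtain ⟨v, hv, hv0⟩ := (rad Q).ne_bot_iff.mp hne
    have hQv : Q v ≠ 0 := fun h => hv0 (hz v hv h)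
    have hspan : rad Q = k ∙ v := by
      refine le_antisymm ?_ ?_
      · intro x hx
        rcases eq_or_ne (Q x) 0 with hQx | hQx
        · rw [hz x hx hQx]; exact Submodule.zero_mem _
        · obtain ⟨c, hc⟩ := hk (Q x * (Q v)⁻¹)
          have hw : x + c • v ∈ rad Q := Submodule.add_mem _ hx (Submodule.smul_mem _ _ hv)
          have hQw : Q (x + c • v) = 0 := by
            rw [map_add' Q, QuadraticMap.map_smul, smul_eq_mul,
              (mem_rad_iff Q x).mp hx (c • v), hc]
            field_simp
            rw [char2 (1 : k), mul_zero, add_zero]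
          have := hz _ hw hQw
          have hx' : x = (-c) • v := by
            rw [neg_smul]
            exact eq_neg_of_add_eq_zero_left this
          rw [hx']
          exact Submodule.smul_mem _ _ (Submodule.mem_span_singleton_self v)
      · rw [Submodule.span_singleton_le_iff_mem]; exact hv
    obtain ⟨C, hC⟩ := Submodule.exists_isCompl (k ∙ v)
    set B := Q.polarBilin with hB
    have hBa : ∀ x y, B x y = polar Q x y := fun x y => rfl
    have haltC : ∀ u : C, (LinearMap.BilinForm.restrict B C) u u = 0 := by
      intro u
      have : polar Q (u : V) u = 2 • Q (u : V) := polar_self _ _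
      have h2 : (2 : ℕ) • Q (u : V) = Q (u : V) + Q (u : V) := two_nsmul _
      show polar Q (u : V) u = 0
      rw [this, h2, char2]
    have hndC : (LinearMap.BilinForm.restrict B C).Nondegenerate := by
      refine (LinearMap.IsRefl.nondegenerate_iff_separatingLeft (B := LinearMap.BilinForm.restrict B C)
        (fun a b h => refl_polarBilin Q (a : V) b h)).mpr ?_
      rintro ⟨u, hu⟩ h
      have hurad : u ∈ rad Q := by
        rw [mem_rad_iff]
        intro y
        have hy : y ∈ (k ∙ v) ⊔ C := by rw [hC.sup_eq_top]; trivial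
        obtain ⟨p, hp, q, hq, rfl⟩ := Submodule.mem_sup.mp hy
        obtain ⟨c, rfl⟩ := Submodule.mem_span_singleton.mp hp
        have h1 : polar Q u (c • v) = 0 := by
          rw [polar_smul_right, polar_comm, (mem_rad_iff Q v).mp hv u, smul_zero]
        have h2 : polar Q u q = 0 := h ⟨q, hq⟩
        rw [polar_add_right, h1, h2, add_zero]
      have : u ∈ (k ∙ v) ⊓ C := ⟨hspan ▸ hurad, hu⟩
      rw [hC.inf_eq_bot] at this
      exact Subtype.ext this
    have hevenC : Even (finrank k C) :=
      even_finrank_of_alt_nondeg (finrank k C) C (LinearMap.BilinForm.restrict B C) haltC hndC rfl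
    have hfr : finrank k (k ∙ v) + finrank k C = finrank k V :=
      Submodule.finrank_add_eq_of_isCompl hC
    rw [finrank_span_singleton hv0] at hfr
    obtain ⟨a, ha⟩ := heven
    obtain ⟨b, hb⟩ := hevenC
    omega
  refine (LinearMap.IsRefl.nondegenerate_iff_separatingLeft (refl_polarBilin Q)).mpr ?_
  intro x hx
  have : x ∈ rad Q := by
    rw [mem_rad_iff]
    intro y
    exact hx y
  rw [hrad] at this
  simpa using this

end nd

section geo
variable {V : Type w} [AddCommGroup V] [Module k V] [FiniteDimensional k V]

/-- A Lagrangian: totally singular of dimension `m` (half the dimension). -/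
def IsLag (Q : QuadraticForm k V) (m : ℕ) (L : Submodule k V) : Prop :=
  (∀ x ∈ L, Q x = 0) ∧ finrank k L = m

variable {Q : QuadraticForm k V} {m : ℕ}

lemma lag_orth_eq (hnd : LinearMap.BilinForm.Nondegenerate Q.polarBilin)
    (hdim : finrank k V = 2 * m) {L : Submodule k V} (hL : IsLag Q m L) :
    LinearMap.BilinForm.orthogonal Q.polarBilin L = L := by
  have hle : L ≤ LinearMap.BilinForm.orthogonal Q.polarBilin L := by
    intro x hx
    rw [LinearMap.BilinForm.mem_orthogonal_iff]
    intro n hn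
    rw [polarBilin_apply_apply]
    exact polar_singular Q hL.1 hn hx
  refine (eq_of_le_of_finrank_le hle ?_).symm
  rw [LinearMap.BilinForm.finrank_orthogonal hnd, hL.2, hdim]
  omega

lemma lem1 (hnd : LinearMap.BilinForm.Nondegenerate Q.polarBilin)
    (hdim : finrank k V = 2 * m) {M M' L : Submodule k V}
    (hM : IsLag Q m M) (hM' : IsLag Q m M') (hL : IsLag Q m L)
    (hZ : finrank k (M ⊓ M' : Submodule k V) + 1 = m) :
    (finrank k (L ⊓ M : Submodule k V) + finrank k (L ⊓ M' : Submodule k V)) % 2 = 1 := by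
  have hrefl := refl_polarBilin Q
  set B := Q.polarBilin with hBdef
  set Z : Submodule k V := M ⊓ M' with hZdef
  have hZM : Z ≤ M := inf_le_left
  have hZM' : Z ≤ M' := inf_le_right
  have hMnleZ : ¬ M ≤ Z := by
    intro h
    have : Z = M := le_antisymm hZM h
    rw [this, hM.2] at hZ
    omega
  have hM'nleZ : ¬ M' ≤ Z := by
    intro h
    have : Z = M' := le_antisymm hZM' h
    rw [this, hM'.2] at hZ
    omega
  obtain ⟨e, heM, heZ⟩ := SetLike.not_le_iff_exists.mp hMnleZ
  obtain ⟨f, hfM', hfZ⟩ := SetLike.not_le_iff_exists.mp hM'nleZ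
  have hfM : f ∉ M := fun h => hfZ (Submodule.mem_inf.mpr ⟨h, hfM'⟩)
  have heM' : e ∉ M' := fun h => heZ (Submodule.mem_inf.mpr ⟨heM, h⟩)
  have hMeq : Z ⊔ (k ∙ e) = M := by
    refine eq_of_le_of_finrank_le (sup_le hZM ((Submodule.span_singleton_le_iff_mem _ _).mpr heM)) ?_
    rw [hM.2, finrank_sup_span heZ]
    omega
  have hM'eq : Z ⊔ (k ∙ f) = M' := by
    refine eq_of_le_of_finrank_le (sup_le hZM' ((Submodule.span_singleton_le_iff_mem _ _).mpr hfM')) ?_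
    rw [hM'.2, finrank_sup_span hfZ]
    omega
  have hb : polar Q e f ≠ 0 := by
    intro hb0
    have he' : e ∈ LinearMap.BilinForm.orthogonal B M' := by
      rw [LinearMap.BilinForm.mem_orthogonal_iff]
      intro n hn
      rw [← hM'eq] at hn
      obtain ⟨z, hz, q, hq, rfl⟩ := Submodule.mem_sup.mp hn
      obtain ⟨c, rfl⟩ := mem_span_singleton.mp hq
      show polar Q (z + c • f) e = 0
      rw [polar_add_left, polar_smul_left, polar_singular Q hM.1 (hZM hz) heM,
        polar_comm, hb0]
      simp
    rw [lag_orth_eq hnd hdim hM'] at he'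
    exact heM' he'
  set Zp : Submodule k V := LinearMap.BilinForm.orthogonal B Z with hZpdef
  have hZpfr : finrank k Zp = m + 1 := by
    rw [hZpdef, LinearMap.BilinForm.finrank_orthogonal hnd, hdim]
    omega
  have hMZp : M ≤ Zp := by
    intro v hv
    rw [hZpdef, LinearMap.BilinForm.mem_orthogonal_iff]
    intro n hn
    show polar Q n v = 0
    exact polar_singular Q hM.1 (hZM hn) hv
  have hM'Zp : M' ≤ Zp := by
    intro v hv
    rw [hZpdef, LinearMap.BilinForm.mem_orthogonal_iff]
    intro n hn
    show polar Q n v = 0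
    exact polar_singular Q hM'.1 (hZM' hn) hv
  have hZpeq : M ⊔ (k ∙ f) = Zp := by
    refine eq_of_le_of_finrank_le (sup_le hMZp ((Submodule.span_singleton_le_iff_mem _ _).mpr (hM'Zp hfM'))) ?_
    rw [hZpfr, finrank_sup_span hfM, hM.2]
  set L' : Submodule k V := L ⊓ Zp with hL'def
  set a : ℕ := finrank k (L ⊓ Z : Submodule k V) with hadef
  have haZ : a ≤ finrank k Z := finrank_mono inf_le_right
  have hL'low : a + 1 ≤ finrank k L' := by
    have hsupinf := Submodule.finrank_sup_add_finrank_inf_eq L Zp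
    rw [← hL'def] at hsupinf
    have horth : L ⊔ Zp ≤ LinearMap.BilinForm.orthogonal B (L ⊓ Z) := by
      refine sup_le ?_ ?_
      · intro v hv
        rw [LinearMap.BilinForm.mem_orthogonal_iff]
        intro n hn
        show polar Q n v = 0
        exact polar_singular Q hL.1 (Submodule.mem_inf.mp hn).1 hv
      · exact LinearMap.BilinForm.orthogonal_le inf_le_right
    have h1 : finrank k (L ⊔ Zp : Submodule k V) ≤
        finrank k (LinearMap.BilinForm.orthogonal B (L ⊓ Z)) := finrank_mono horth
    rw [LinearMap.BilinForm.finrank_orthogonal hnd, hdim] at h1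
    rw [hL.2, hZpfr] at hsupinf
    rw [← hadef] at h1
    have haV : a ≤ 2 * m := by
      have : (L ⊓ Z : Submodule k V) ≤ ⊤ := le_top
      have := finrank_mono this
      rw [finrank_top, hdim] at this
      exact this
    omega
  have hsplit : ∀ v ∈ L', v ∈ M ∨ v ∈ M' := by
    intro v hv
    have hvZp : v ∈ Zp := (Submodule.mem_inf.mp hv).2
    rw [← hZpeq] at hvZp
    obtain ⟨w, hw, q, hq, rfl⟩ := Submodule.mem_sup.mp hvZp
    obtain ⟨c, rfl⟩ := mem_span_singleton.mp hq
    rw [← hMeq] at hw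
    obtain ⟨z, hz, p, hp, rfl⟩ := Submodule.mem_sup.mp hw
    obtain ⟨d, rfl⟩ := mem_span_singleton.mp hp
    have hQv : Q (z + d • e + c • f) = 0 := hL.1 _ (Submodule.mem_inf.mp hv).1
    have hexp : Q (z + d • e + c • f) = c * (d * polar Q e f) := by
      have e1 : Q (z + d • e + c • f)
          = Q (z + d • e) + Q (c • f) + polar Q (z + d • e) (c • f) := by
        unfold QuadraticMap.polar; ring
      have e2 : Q (z + d • e) = Q z + Q (d • e) + polar Q z (d • e) := by
        unfold QuadraticMap.polar; ring
      rw [e1, e2, hM.1 z (hZM hz), QuadraticMap.map_smul, QuadraticMap.map_smul,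
        hM.1 e heM, hM'.1 f hfM', polar_smul_right, polar_smul_right,
        polar_singular Q hM.1 (hZM hz) heM, polar_add_left, polar_smul_left,
        polar_singular Q hM'.1 (hZM' hz) hfM']
      simp only [smul_eq_mul, mul_zero, zero_add, add_zero, zero_mul]
      try ring
    rw [hexp] at hQv
    rcases mul_eq_zero.mp hQv with hc | hdc
    · left
      rw [hc, zero_smul, add_zero]
      exact add_mem (hZM hz) (Submodule.smul_mem _ _ heM)
    · have hd : d = 0 := by
        rcases mul_eq_zero.mp hdc with h | h
        · exact h
        · exact absurd h hb
      right
      rw [hd, zero_smul, add_zero]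
      exact add_mem (hZM' hz) (Submodule.smul_mem _ _ hfM')
  have hZZp : Z ≤ Zp := by
    intro z hz
    rw [hZpdef, LinearMap.BilinForm.mem_orthogonal_iff]
    intro n hn
    show polar Q n z = 0
    exact polar_singular Q hM.1 (hZM hn) (hZM hz)
  have hcase : L' ≤ M ∨ L' ≤ M' := by
    by_contra hcon
    push_neg at hcon
    obtain ⟨h1, h2⟩ := hcon
    obtain ⟨u, hu, huM⟩ := SetLike.not_le_iff_exists.mp h1
    obtain ⟨w, hw, hwM'⟩ := SetLike.not_le_iff_exists.mp h2
    have huM' : u ∈ M' := (hsplit u hu).resolve_left huM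
    have hwM : w ∈ M := (hsplit w hw).resolve_right hwM'
    rcases hsplit (u + w) (add_mem hu hw) with h | h
    · have : u + w - w ∈ M := sub_mem h hwM
      rw [add_sub_cancel_right] at this
      exact huM this
    · have : u + w - u ∈ M' := sub_mem h huM'
      rw [add_sub_cancel_left] at this
      exact hwM' this
  have hZfr : finrank k Z + 1 = m := hZ
  rcases hcase with hcL | hcL
  · -- L' ≤ M
    have r1 : L ⊓ M = L' := le_antisymm (inf_le_inf_left L hMZp) (le_inf inf_le_left hcL)
    have r2 : finrank k L' ≤ a + 1 := by
      have hinfZ : L' ⊓ Z = L ⊓ Z := by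
        refine le_antisymm (inf_le_inf_right Z inf_le_left) ?_
        exact le_inf (le_inf inf_le_left (le_trans inf_le_right hZZp)) inf_le_right
      have hsupZ : L' ⊔ Z ≤ M := sup_le hcL hZM
      have heq := Submodule.finrank_sup_add_finrank_inf_eq L' Z
      rw [hinfZ, ← hadef] at heq
      have h3 : finrank k (L' ⊔ Z : Submodule k V) ≤ m := by
        have := finrank_mono hsupZ
        rwa [hM.2] at this
      omega
    have r3 : L ⊓ M' = L ⊓ Z := by
      refine le_antisymm ?_ (inf_le_inf_left L hZM')
      intro v hv
      have hv' := Submodule.mem_inf.mp hv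
      have hvL' : v ∈ L' := Submodule.mem_inf.mpr ⟨hv'.1, hM'Zp hv'.2⟩
      exact Submodule.mem_inf.mpr ⟨hv'.1, Submodule.mem_inf.mpr ⟨hcL hvL', hv'.2⟩⟩
    rw [r1, r3, ← hadef]
    omega
  · -- L' ≤ M'
    have r1 : L ⊓ M' = L' := le_antisymm (inf_le_inf_left L hM'Zp) (le_inf inf_le_left hcL)
    have r2 : finrank k L' ≤ a + 1 := by
      have hinfZ : L' ⊓ Z = L ⊓ Z := by
        refine le_antisymm (inf_le_inf_right Z inf_le_left) ?_
        exact le_inf (le_inf inf_le_left (le_trans inf_le_right hZZp)) inf_le_right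
      have hsupZ : L' ⊔ Z ≤ M' := sup_le hcL hZM'
      have heq := Submodule.finrank_sup_add_finrank_inf_eq L' Z
      rw [hinfZ, ← hadef] at heq
      have h3 : finrank k (L' ⊔ Z : Submodule k V) ≤ m := by
        have := finrank_mono hsupZ
        rwa [hM'.2] at this
      omega
    have r3 : L ⊓ M = L ⊓ Z := by
      refine le_antisymm ?_ (inf_le_inf_left L hZM)
      intro v hv
      have hv' := Submodule.mem_inf.mp hv
      have hvL' : v ∈ L' := Submodule.mem_inf.mpr ⟨hv'.1, hMZp hv'.2⟩
      exact Submodule.mem_inf.mpr ⟨hv'.1, Submodule.mem_inf.mpr ⟨hv'.2, hcL hvL'⟩⟩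
    rw [r1, r3, ← hadef]
    omega

lemma lemL (hnd : LinearMap.BilinForm.Nondegenerate Q.polarBilin)
    (hdim : finrank k V = 2 * m) {L P : Submodule k V}
    (hL : IsLag Q m L) (hP : IsLag Q m P) :
    ∀ d : ℕ, ∀ M : Submodule k V, IsLag Q m M → finrank k (M ⊓ P : Submodule k V) + d = m →
      (finrank k (L ⊓ M : Submodule k V) + finrank k (M ⊓ P : Submodule k V)
        + finrank k (L ⊓ P : Submodule k V) + m) % 2 = 0 := by
  intro d
  induction d with
  | zero =>
    intro M hM hd
    rw [Nat.add_zero] at hd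
    have h1 : M ⊓ P = M := eq_of_le_of_finrank_le inf_le_left (by rw [hM.2, hd])
    have h2 : M ⊓ P = P := eq_of_le_of_finrank_le inf_le_right (by rw [hP.2, hd])
    have hMP : M = P := h1 ▸ h2
    subst hMP
    rw [h1, hM.2]
    omega
  | succ d ih =>
    intro M hM hd
    have hPnleM : ¬ P ≤ M := by
      intro h
      have : M ⊓ P = P := le_antisymm inf_le_right (le_inf h le_rfl)
      rw [this, hP.2] at hd
      omega
    obtain ⟨x, hxP, hxM⟩ := SetLike.not_le_iff_exists.mp hPnleM
    set φ : V →ₗ[k] k := Q.polarBilin x with hφdef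
    have hφapp : ∀ v, φ v = polar Q x v := fun v => rfl
    have hy : ∃ y ∈ M, polar Q x y ≠ 0 := by
      by_contra h
      push_neg at h
      have : x ∈ LinearMap.BilinForm.orthogonal Q.polarBilin M := by
        rw [LinearMap.BilinForm.mem_orthogonal_iff]
        intro n hn
        show polar Q n x = 0
        rw [polar_comm]
        exact h n hn
      rw [lag_orth_eq hnd hdim hM] at this
      exact hxM this
    obtain ⟨y, hyM, hxy⟩ := hy
    set Z' : Submodule k V := M ⊓ LinearMap.ker φ with hZ'def
    have hZ'fr : finrank k Z' + 1 = m := by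
      rw [hZ'def]
      rw [← hM.2]
      exact finrank_inf_ker M φ hyM (by rw [hφapp]; exact hxy)
    have hxZ' : x ∉ Z' := fun h => hxM (Submodule.mem_inf.mp h).1
    set M'' : Submodule k V := Z' ⊔ (k ∙ x) with hM''def
    have hM''fr : finrank k M'' = m := by
      rw [hM''def, finrank_sup_span hxZ']
      omega
    have hM''sing : ∀ v ∈ M'', Q v = 0 := by
      intro v hv
      rw [hM''def] at hv
      obtain ⟨w, hw, q, hq, rfl⟩ := Submodule.mem_sup.mp hv
      obtain ⟨c, rfl⟩ := mem_span_singleton.mp hq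
      have e1 : Q (w + c • x) = Q w + Q (c • x) + polar Q w (c • x) := by
        unfold QuadraticMap.polar; ring
      have hwM : w ∈ M := (Submodule.mem_inf.mp hw).1
      have hwker : φ w = 0 := (Submodule.mem_inf.mp hw).2
      rw [hφapp] at hwker
      rw [e1, hM.1 w hwM, QuadraticMap.map_smul, hP.1 x hxP, polar_smul_right,
        polar_comm, hwker]
      simp
    have hM'' : IsLag Q m M'' := ⟨hM''sing, hM''fr⟩
    have hMM'' : M ⊓ M'' = Z' := by
      refine le_antisymm ?_ (le_inf inf_le_left le_sup_left)
      intro v hv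
      have hv' := Submodule.mem_inf.mp hv
      rw [hM''def] at hv'
      obtain ⟨w, hw, q, hq, hsum⟩ := Submodule.mem_sup.mp hv'.2
      obtain ⟨c, rfl⟩ := mem_span_singleton.mp hq
      have hwM : w ∈ M := (Submodule.mem_inf.mp hw).1
      have hcx : c • x ∈ M := by
        have : v - w ∈ M := sub_mem hv'.1 hwM
        rw [← hsum] at this
        simpa using this
      have hc0 : c = 0 := by
        by_contra hc
        have : x ∈ M := by
          have := M.smul_mem c⁻¹ hcx
          rwa [smul_smul, inv_mul_cancel₀ hc, one_smul] at this
        exact hxM this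
      rw [hc0, zero_smul, add_zero] at hsum
      rw [← hsum]
      exact hw
    have hMPZ' : M ⊓ P ≤ Z' := by
      intro v hv
      have hv' := Submodule.mem_inf.mp hv
      refine Submodule.mem_inf.mpr ⟨hv'.1, ?_⟩
      rw [LinearMap.mem_ker, hφapp]
      exact polar_singular Q hP.1 hxP hv'.2
    have hM''P : M'' ⊓ P = (M ⊓ P) ⊔ (k ∙ x) := by
      refine le_antisymm ?_ ?_
      · intro v hv
        have hv' := Submodule.mem_inf.mp hv
        rw [hM''def] at hv'
        obtain ⟨w, hw, q, hq, hsum⟩ := Submodule.mem_sup.mp hv'.1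
        obtain ⟨c, rfl⟩ := mem_span_singleton.mp hq
        have hwM : w ∈ M := (Submodule.mem_inf.mp hw).1
        have hwP : w ∈ P := by
          have : v - c • x ∈ P := sub_mem hv'.2 (Submodule.smul_mem _ _ hxP)
          rw [← hsum] at this
          simpa using this
        rw [← hsum]
        exact Submodule.add_mem _ (Submodule.mem_sup_left (Submodule.mem_inf.mpr ⟨hwM, hwP⟩))
          (Submodule.mem_sup_right (Submodule.smul_mem _ _ (mem_span_singleton_self x)))
      · refine sup_le ?_ ?_
        · exact le_inf (le_trans hMPZ' le_sup_left) inf_le_right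
        · exact le_inf (le_trans ((Submodule.span_singleton_le_iff_mem _ _).mpr
            (Submodule.mem_sup_right (mem_span_singleton_self x))) le_rfl)
            ((Submodule.span_singleton_le_iff_mem _ _).mpr hxP)
    have hxMP : x ∉ M ⊓ P := fun h => hxM (Submodule.mem_inf.mp h).1
    have hM''Pfr : finrank k (M'' ⊓ P : Submodule k V) = finrank k (M ⊓ P : Submodule k V) + 1 := by
      rw [hM''P, finrank_sup_span hxMP]
    have hih := ih M'' hM'' (by omega)
    have hodd := lem1 hnd hdim hM hM'' hL (by rw [hMM'']; exact hZ'fr)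
    omega

end geo

end S17

/-- in characteristic 2 with `dim V = D` even and `Q` nondegenerate, for
`N ∈ 𝓜̃_Q` and every maximal totally singular subspace `S` (`dim S = D/2`, `Q|_S = 0`),
`dim(S/(S ∩ (1+N)(S))) ≡ dim ker N (mod 2)`. -/
theorem stmt17 [Field k] [CharP k 2] (hk : Finite k ∨ IsAlgClosed k)
    [AddCommGroup V] [Module k V] [FiniteDimensional k V]
    (heven : Even (Module.finrank k V))
    (Q : QuadraticForm k V) (hQ : QNondeg Q) (N : Module.End k V) (hN : N ∈ Mtilde Q) :
    ∀ S : Submodule k V, Module.finrank k S = Module.finrank k V / 2 →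
      (∀ x ∈ S, Q x = 0) →
      Module.finrank k S - Module.finrank k (S ⊓ Submodule.map (1 + N) S : Submodule k V) ≡
        Module.finrank k (LinearMap.ker N) [MOD 2] := by
  intro S hS1 hS2
  classical
  obtain ⟨hNnil, hNQ⟩ := hN
  obtain ⟨t, ht⟩ := heven
  have hn : Module.finrank k S = t := by rw [hS1]; omega
  -- square roots exist
  have hsqrt : ∀ a : k, ∃ c, c * c = a := by
    rcases hk with hfin | halg
    · intro a
      have hinj : Function.Injective (fun c : k => c * c) := by
        intro a b hab
        simp only at hab
        have h2 : (2 : k) = 0 := by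
          have := CharP.cast_eq_zero k 2
          simpa using this
        have hsq : (a - b) * (a - b) = 2 * (b * b) - 2 * (a * b) := by
          rw [show (a-b)*(a-b) = a*a + b*b - 2*(a*b) by ring, hab]; ring
        rw [h2] at hsq
        simp only [zero_mul, sub_zero, zero_sub] at hsq
        have h0 : (a - b) * (a - b) = 0 := by rw [hsq]; try ring
        exact sub_eq_zero.mp (mul_self_eq_zero.mp h0)
      have hsurj := Finite.injective_iff_surjective.mp hinj
      exact hsurj a
    · intro a
      obtain ⟨c, hc⟩ := IsAlgClosed.exists_pow_nat_eq a (n := 2) (by norm_num)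
      exact ⟨c, by rw [← hc]; ring⟩
  have hBnd : LinearMap.BilinForm.Nondegenerate Q.polarBilin :=
    S17.polarBilin_nondeg hsqrt Q hQ ⟨t, ht⟩
  -- the unipotent isometry g = 1 + N
  set g : Module.End k V := 1 + N with hgdef
  have hgapp : ∀ x, g x = x + N x := by
    intro x
    rw [hgdef, LinearMap.add_apply, Module.End.one_apply]
  have hgbij : Function.Bijective g := by
    rw [← Module.End.isUnit_iff]
    exact hNnil.isUnit_one_add
  have hgQ : ∀ x, Q (g x) = Q x := by
    intro x
    rw [hgapp, S17.map_add' Q, hNQ x]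
    ring
  -- the doubled quadratic space
  set Q2 : QuadraticForm k (V × V) := Q.prod Q with hQ2def
  have hQ2app : ∀ v : V × V, Q2 v = Q v.1 + Q v.2 := fun v => rfl
  have hpolar2 : ∀ v w : V × V, polar Q2 v w = polar Q v.1 w.1 + polar Q v.2 w.2 := by
    intro v w
    rw [hQ2def, QuadraticMap.polar_prod]
  have hBnd2 : LinearMap.BilinForm.Nondegenerate Q2.polarBilin := by
    refine (LinearMap.IsRefl.nondegenerate_iff_separatingLeft (S17.refl_polarBilin Q2)).mpr ?_
    intro v hv
    have h1 : v.1 = 0 := by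
      apply hBnd.1 v.1
      intro y
      have := hv (y, 0)
      rw [polarBilin_apply_apply, hpolar2] at this
      rw [polarBilin_apply_apply]
      simpa [polar_zero_right] using this
    have h2 : v.2 = 0 := by
      apply hBnd.1 v.2
      intro y
      have := hv (0, y)
      rw [polarBilin_apply_apply, hpolar2] at this
      rw [polarBilin_apply_apply]
      simpa [polar_zero_right] using this
    exact Prod.ext h1 h2
  have hchar2 : ∀ c : k, c + c = 0 := S17.char2
  set D : ℕ := Module.finrank k V with hDdef
  have hdim2 : Module.finrank k (V × V) = 2 * D := by
    rw [Module.finrank_prod]; omega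
  -- the three Lagrangians
  set j1 : V →ₗ[k] V × V := (LinearMap.id : V →ₗ[k] V).prod (LinearMap.id) with hj1def
  set jg : V →ₗ[k] V × V := (LinearMap.id : V →ₗ[k] V).prod g with hjgdef
  have hj1app : ∀ x, j1 x = (x, x) := fun x => rfl
  have hjgapp : ∀ x, jg x = (x, g x) := fun x => rfl
  have hj1inj : Function.Injective j1 := by
    intro a b hab
    have := congrArg Prod.fst hab
    simpa [hj1app] using this
  have hjginj : Function.Injective jg := by
    intro a b hab
    have := congrArg Prod.fst hab
    simpa [hjgapp] using this
  set Δ : Submodule k (V × V) := LinearMap.range j1 with hΔdef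
  set Γ : Submodule k (V × V) := LinearMap.range jg with hΓdef
  set SS : Submodule k (V × V) := S.prod S with hSSdef
  have hΔlag : S17.IsLag Q2 D Δ := by
    constructor
    · rintro v ⟨a, rfl⟩
      rw [hj1app, hQ2app]
      exact hchar2 _
    · rw [hΔdef, LinearMap.finrank_range_of_inj hj1inj]
  have hΓlag : S17.IsLag Q2 D Γ := by
    constructor
    · rintro v ⟨a, rfl⟩
      rw [hjgapp, hQ2app]
      simp only
      rw [hgQ]
      exact hchar2 _
    · rw [hΓdef, LinearMap.finrank_range_of_inj hjginj]
  have hSSfr : Module.finrank k SS = 2 * t := by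
    have hsup : SS = Submodule.map (LinearMap.inl k V V) S ⊔ Submodule.map (LinearMap.inr k V V) S :=
      LinearMap.prod_eq_sup_map S S
    have hinf : Submodule.map (LinearMap.inl k V V) S ⊓ Submodule.map (LinearMap.inr k V V) S = ⊥ := by
      rw [eq_bot_iff]
      rintro ⟨a, b⟩ ⟨h1, h2⟩
      obtain ⟨s, hs, hs'⟩ := h1
      obtain ⟨u, hu, hu'⟩ := h2
      rw [LinearMap.coe_inl] at hs'
      rw [LinearMap.coe_inr] at hu'
      have ha : a = 0 := by
        have := congrArg Prod.fst hu'
        simpa using this.symm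
      have hb : b = 0 := by
        have := congrArg Prod.snd hs'
        simpa using this.symm
      simp [ha, hb]
    have e1 : Module.finrank k (Submodule.map (LinearMap.inl k V V) S) = Module.finrank k S :=
      ((Submodule.equivMapOfInjective _ LinearMap.inl_injective S).finrank_eq).symm
    have e2 : Module.finrank k (Submodule.map (LinearMap.inr k V V) S) = Module.finrank k S :=
      ((Submodule.equivMapOfInjective _ LinearMap.inr_injective S).finrank_eq).symm
    have := Submodule.finrank_sup_add_finrank_inf_eq
      (Submodule.map (LinearMap.inl k V V) S) (Submodule.map (LinearMap.inr k V V) S)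
    rw [hinf, finrank_bot, e1, e2, hn] at this
    rw [hsup]
    omega
  have hSSlag : S17.IsLag Q2 D SS := by
    constructor
    · rintro ⟨a, b⟩ hv
      replace hv : a ∈ S ∧ b ∈ S := hv
      rw [hQ2app]
      simp only
      rw [hS2 a hv.1, hS2 b hv.2, add_zero]
    · rw [hSSfr]; omega
  -- the three intersections
  have hΓΔ : Γ ⊓ Δ = Submodule.map j1 (LinearMap.ker N) := by
    ext v
    constructor
    · rintro ⟨⟨a, ha⟩, ⟨b, hb⟩⟩
      rw [hjgapp] at ha
      rw [hj1app] at hb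
      have hb1 : b = v.1 := congrArg Prod.fst hb
      have hb2 : b = v.2 := congrArg Prod.snd hb
      have ha1 : a = v.1 := congrArg Prod.fst ha
      have ha2 : g a = v.2 := congrArg Prod.snd ha
      have hNa : N a = 0 := by
        have : g a = a := by rw [ha2, ← hb2, hb1, ha1]
        rw [hgapp] at this
        exact (add_eq_left).mp this
      refine ⟨a, hNa, ?_⟩
      rw [hj1app, ha1]
      have : v.2 = v.1 := by rw [← hb2, hb1]
      exact Prod.ext rfl this.symm
    · rintro ⟨c, hc, rfl⟩
      constructor
      · exact ⟨c, by rw [hjgapp, hj1app, hgapp, hc, add_zero]⟩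
      · exact ⟨c, rfl⟩
  have hΔSS : Δ ⊓ SS = Submodule.map j1 S := by
    ext v
    constructor
    · rintro ⟨⟨a, ha⟩, hss⟩
      rw [hj1app] at ha
      replace hss : v.1 ∈ S ∧ v.2 ∈ S := hss
      refine ⟨a, ?_, ha⟩
      have : a = v.1 := congrArg Prod.fst ha
      rw [this]; exact hss.1
    · rintro ⟨c, hc, rfl⟩
      exact ⟨⟨c, rfl⟩, by rw [hj1app]; exact Submodule.mem_prod.mpr ⟨hc, hc⟩⟩
  have hΓSS : Γ ⊓ SS = Submodule.map jg (S ⊓ Submodule.comap g S) := by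
    ext v
    constructor
    · rintro ⟨⟨a, ha⟩, hss⟩
      rw [hjgapp] at ha
      replace hss : v.1 ∈ S ∧ v.2 ∈ S := hss
      have ha1 : a = v.1 := congrArg Prod.fst ha
      have ha2 : g a = v.2 := congrArg Prod.snd ha
      refine ⟨a, ⟨?_, ?_⟩, by rw [hjgapp]; exact ha⟩
      · rw [ha1]; exact hss.1
      · show g a ∈ S
        rw [ha2]; exact hss.2
    · rintro ⟨c, ⟨hc1, hc2⟩, rfl⟩
      replace hc2 : g c ∈ S := hc2
      exact ⟨⟨c, rfl⟩, by rw [hjgapp]; exact Submodule.mem_prod.mpr ⟨hc1, hc2⟩⟩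
  have hfrΓΔ : Module.finrank k (Γ ⊓ Δ : Submodule k (V × V))
      = Module.finrank k (LinearMap.ker N) := by
    rw [hΓΔ]
    exact ((Submodule.equivMapOfInjective _ hj1inj _).finrank_eq).symm
  have hfrΔSS : Module.finrank k (Δ ⊓ SS : Submodule k (V × V)) = t := by
    rw [hΔSS, ← hn]
    exact ((Submodule.equivMapOfInjective _ hj1inj _).finrank_eq).symm
  have hfrΓSS : Module.finrank k (Γ ⊓ SS : Submodule k (V × V))
      = Module.finrank k (S ⊓ Submodule.comap g S : Submodule k V) := by
    rw [hΓSS]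
    exact ((Submodule.equivMapOfInjective _ hjginj _).finrank_eq).symm
  -- apply the key lemma
  have hkey := S17.lemL hBnd2 hdim2 hΓlag hSSlag t Δ hΔlag (by rw [hfrΔSS]; omega)
  rw [hfrΓΔ, hfrΔSS, hfrΓSS] at hkey
  -- identify S ⊓ g S with S ⊓ g⁻¹ S
  have hmapinf : Submodule.map g (S ⊓ Submodule.comap g S) = Submodule.map g S ⊓ S := by
    rw [Submodule.map_inf _ hgbij.injective,
      Submodule.map_comap_eq_of_surjective hgbij.surjective]
  have hfrmap : Module.finrank k (S ⊓ Submodule.map g S : Submodule k V)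
      = Module.finrank k (S ⊓ Submodule.comap g S : Submodule k V) := by
    rw [inf_comm, ← hmapinf]
    exact ((Submodule.equivMapOfInjective _ hgbij.injective _).finrank_eq).symm
  have hle : Module.finrank k (S ⊓ Submodule.comap g S : Submodule k V)
      ≤ Module.finrank k S := Submodule.finrank_mono inf_le_left
  show (Module.finrank k S - Module.finrank k (S ⊓ Submodule.map (1 + N) S : Submodule k V)) % 2
    = Module.finrank k (LinearMap.ker N) % 2
  rw [← hgdef, hfrmap, hn]
  omega
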